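/- For each i ∈ {2,3}, the following identity of ℤ-linear endomorphisms of M_n holds: Hi⁺∘F1⁺ + Hi⁻∘F1⁻ + F1⁺∘Hi⁻ + F1⁻∘Hi⁺ + (−a_{i1})·F1⁻ = Hi⁺∘F1⁻ + Hi⁻∘F1⁺ + F1⁺∘Hi⁺ + F1⁻∘Hi⁻ + (−a_{i1})·F1⁺, where a_{21} = −1 and a_{31} = 0 are Cartan matrix entries of type B_3. (Decategorified content of Theorem 3.4(4)(b), lifting the relations h_i f_1 − f_1 h_i = −a_{i1} f_1.) -/
import Mathlib


/-- The free `ℤ`-module on the sequences `a : Fin n → Fin 8`, modelling the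
Grothendieck group `K(𝒪ⁿ)` with basis the classes `b_a` of Verma modules. -/
abbrev GrGroup (n : ℕ) : Type := (Fin n → Fin 8) →₀ ℤ

/-- The basis element `b_a` of the Grothendieck group model. -/
noncomputable def bclass {n : ℕ} (a : Fin n → Fin 8) : GrGroup n := Finsupp.single a 1

/-- The integers `c₁(a), c₂(a), c₃(a)` attached to a sequence `a : Fin n → Fin 8`:
`c₁(a) = #{m : aₘ ∈ {4,5}} − #{m : aₘ ∈ {2,3}}`,
`c₂(a) = #{m : aₘ ∈ {2,6}} − #{m : aₘ ∈ {1,5}}`,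
`c₃(a) = #{m : aₘ odd} − #{m : aₘ even}`. -/
def cseq {n : ℕ} : Fin 3 → (Fin n → Fin 8) → ℤ
  | 0, a => ((Finset.univ.filter fun m => a m = 4 ∨ a m = 5).card : ℤ) -
      ((Finset.univ.filter fun m => a m = 2 ∨ a m = 3).card : ℤ)
  | 1, a => ((Finset.univ.filter fun m => a m = 2 ∨ a m = 6).card : ℤ) -
      ((Finset.univ.filter fun m => a m = 1 ∨ a m = 5).card : ℤ)
  | 2, a => ((Finset.univ.filter fun m => (a m : ℕ) % 2 = 1).card : ℤ) -
      ((Finset.univ.filter fun m => (a m : ℕ) % 2 = 0).card : ℤ)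

/-- `Hᵢ⁺` acts on the basis element `b_a` by the scalar `max(cᵢ(a), 0)`. -/
noncomputable def Hplus (n : ℕ) (i : Fin 3) : GrGroup n →ₗ[ℤ] GrGroup n :=
  Finsupp.lift (GrGroup n) ℤ (Fin n → Fin 8) (fun a => max (cseq i a) 0 • bclass a)

/-- `Hᵢ⁻` acts on the basis element `b_a` by the scalar `max(−cᵢ(a), 0)`. -/
noncomputable def Hminus (n : ℕ) (i : Fin 3) : GrGroup n →ₗ[ℤ] GrGroup n :=
  Finsupp.lift (GrGroup n) ℤ (Fin n → Fin 8) (fun a => max (-cseq i a) 0 • bclass a)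


/-- `F₁⁺ b_a = Σ_{m : aₘ∈{4,5}} b_{a[m↦aₘ−2]}
+ Σ_{i<j : {aᵢ,aⱼ}={3,4} or {4,5}} b_{a[i↦aᵢ−1][j↦aⱼ−1]}`. -/
noncomputable def F1plus (n : ℕ) : GrGroup n →ₗ[ℤ] GrGroup n :=
  Finsupp.lift (GrGroup n) ℤ (Fin n → Fin 8) (fun a =>
    (∑ m : Fin n, if a m = 4 ∨ a m = 5 then
        bclass (Function.update a m (a m - 2)) else 0) +
    ∑ i : Fin n, ∑ j : Fin n,
      if i < j ∧ ((a i = 3 ∧ a j = 4) ∨ (a i = 4 ∧ a j = 3) ∨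
          (a i = 4 ∧ a j = 5) ∨ (a i = 5 ∧ a j = 4)) then
        bclass (Function.update (Function.update a i (a i - 1)) j (a j - 1)) else 0)

/-- `F₁⁻ b_a = Σ_{i<j : {aᵢ,aⱼ}={3,4} or {4,5}} b_{a[i↦aᵢ−1][j↦aⱼ−1]}`. -/
noncomputable def F1minus (n : ℕ) : GrGroup n →ₗ[ℤ] GrGroup n :=
  Finsupp.lift (GrGroup n) ℤ (Fin n → Fin 8) (fun a =>
    ∑ i : Fin n, ∑ j : Fin n,
      if i < j ∧ ((a i = 3 ∧ a j = 4) ∨ (a i = 4 ∧ a j = 3) ∨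
          (a i = 4 ∧ a j = 5) ∨ (a i = 5 ∧ a j = 4)) then
        bclass (Function.update (Function.update a i (a i - 1)) j (a j - 1)) else 0)


/-- The Cartan matrix entries `a₂₁ = −1` and `a₃₁ = 0` of type `B₃`
(indexed by `Fin 2`, standing for the rows `i = 2, 3`). -/
def cartanB3_col1 : Fin 2 → ℤ := ![-1, 0]

noncomputable def Ssum {n : ℕ} (a : Fin n → Fin 8) : GrGroup n :=
  ∑ m : Fin n, if a m = 4 ∨ a m = 5 then bclass (Function.update a m (a m - 2)) else 0

noncomputable def Dsum {n : ℕ} (a : Fin n → Fin 8) : GrGroup n :=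
  ∑ i : Fin n, ∑ j : Fin n,
      if i < j ∧ ((a i = 3 ∧ a j = 4) ∨ (a i = 4 ∧ a j = 3) ∨
          (a i = 4 ∧ a j = 5) ∨ (a i = 5 ∧ a j = 4)) then
        bclass (Function.update (Function.update a i (a i - 1)) j (a j - 1)) else 0

lemma Hplus_apply {n : ℕ} (i : Fin 3) (a : Fin n → Fin 8) :
    Hplus n i (bclass a) = max (cseq i a) 0 • bclass a := by
  show Hplus n i (Finsupp.single a 1) = _
  rw [Hplus, Finsupp.lift_apply, Finsupp.sum_single_index (by simp), one_smul]

lemma Hminus_apply {n : ℕ} (i : Fin 3) (a : Fin n → Fin 8) :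
    Hminus n i (bclass a) = max (-cseq i a) 0 • bclass a := by
  show Hminus n i (Finsupp.single a 1) = _
  rw [Hminus, Finsupp.lift_apply, Finsupp.sum_single_index (by simp), one_smul]

lemma F1plus_apply {n : ℕ} (a : Fin n → Fin 8) :
    F1plus n (bclass a) = Ssum a + Dsum a := by
  show F1plus n (Finsupp.single a 1) = _
  rw [F1plus, Finsupp.lift_apply, Finsupp.sum_single_index (by simp), one_smul]
  rfl

lemma F1minus_apply {n : ℕ} (a : Fin n → Fin 8) :
    F1minus n (bclass a) = Dsum a := by
  show F1minus n (Finsupp.single a 1) = _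
  rw [F1minus, Finsupp.lift_apply, Finsupp.sum_single_index (by simp), one_smul]
  rfl

lemma card_filter_update {n : ℕ} (a : Fin n → Fin 8) (m : Fin n) (k : Fin 8)
    (p : Fin 8 → Prop) [DecidablePred p] :
    ((Finset.univ.filter fun x => p (Function.update a m k x)).card : ℤ) =
    ((Finset.univ.filter fun x => p (a x)).card : ℤ) + (if p k then 1 else 0)
      - (if p (a m) then 1 else 0) := by
  have h1 : ∀ (b : Fin n → Fin 8), ((Finset.univ.filter fun x => p (b x)).card : ℤ)
      = (if p (b m) then 1 else 0)
        + ∑ x ∈ Finset.univ.erase m, (if p (b x) then (1:ℤ) else 0) := by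
    intro b
    rw [Finset.card_filter]; push_cast
    rw [← Finset.add_sum_erase _ _ (Finset.mem_univ m)]
  rw [h1, h1 a, Function.update_self]
  rw [Finset.sum_congr rfl (fun x hx => by
    rw [Function.update_of_ne (Finset.ne_of_mem_erase hx)])]
  ring

lemma cseq_update {n : ℕ} (i : Fin 2) (a : Fin n → Fin 8) (m : Fin n)
    (h : a m = 4 ∨ a m = 5) :
    cseq i.succ (Function.update a m (a m - 2)) = cseq i.succ a + (-cartanB3_col1 i) := by
  fin_cases i
  · show cseq 1 _ = cseq 1 a + _
    show ((Finset.univ.filter fun x => (Function.update a m (a m - 2)) x = 2 ∨ (Function.update a m (a m - 2)) x = 6).card : ℤ)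
        - ((Finset.univ.filter fun x => (Function.update a m (a m - 2)) x = 1 ∨ (Function.update a m (a m - 2)) x = 5).card : ℤ)
      = _ + _
    rw [card_filter_update a m (a m - 2) (fun y => y = 2 ∨ y = 6),
        card_filter_update a m (a m - 2) (fun y => y = 1 ∨ y = 5)]
    rcases h with h | h <;> rw [h] <;>
      simp (config := { decide := true }) [cseq, cartanB3_col1] <;> ring
  · show cseq 2 _ = cseq 2 a + _
    show ((Finset.univ.filter fun x => ((Function.update a m (a m - 2)) x : ℕ) % 2 = 1).card : ℤ)
        - ((Finset.univ.filter fun x => ((Function.update a m (a m - 2)) x : ℕ) % 2 = 0).card : ℤ)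
      = _ + _
    rw [card_filter_update a m (a m - 2) (fun y => (y:ℕ) % 2 = 1),
        card_filter_update a m (a m - 2) (fun y => (y:ℕ) % 2 = 0)]
    rcases h with h | h <;> rw [h] <;>
      simp (config := { decide := true }) [cseq, cartanB3_col1] <;> ring

lemma max_sub_max (c : ℤ) : max c 0 - max (-c) 0 = c := by
  rcases le_total c 0 with h | h
  · rw [max_eq_right h, max_eq_left (by omega)]; ring
  · rw [max_eq_left h, max_eq_right (by omega)]; ring

lemma key {n : ℕ} (i : Fin 2) (a : Fin n → Fin 8) :
    Hplus n i.succ (Ssum a) - Hminus n i.succ (Ssum a)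
      = (cseq i.succ a + (-cartanB3_col1 i)) • Ssum a := by
  unfold Ssum
  rw [map_sum, map_sum, ← Finset.sum_sub_distrib, Finset.smul_sum]
  refine Finset.sum_congr rfl fun m _ => ?_
  by_cases h : a m = 4 ∨ a m = 5
  · rw [if_pos h, Hplus_apply, Hminus_apply, cseq_update i a m h, ← sub_smul, max_sub_max]
  · rw [if_neg h]; simp


/-- Decategorified Theorem 3.4(4)(b): for `i ∈ {2,3}` (indexed by `Fin 2`, with
`i.succ : Fin 3` the corresponding index of `Hᵢ`),
`Hᵢ⁺∘F₁⁺ + Hᵢ⁻∘F₁⁻ + F₁⁺∘Hᵢ⁻ + F₁⁻∘Hᵢ⁺ + (−aᵢ₁)F₁⁻ =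
 Hᵢ⁺∘F₁⁻ + Hᵢ⁻∘F₁⁺ + F₁⁺∘Hᵢ⁺ + F₁⁻∘Hᵢ⁻ + (−aᵢ₁)F₁⁺`,
lifting the relation `hᵢf₁ − f₁hᵢ = −aᵢ₁ f₁`. -/
theorem HF1_relation (n : ℕ) (hn : 0 < n) (i : Fin 2) :
    Hplus n i.succ ∘ₗ F1plus n + Hminus n i.succ ∘ₗ F1minus n +
        F1plus n ∘ₗ Hminus n i.succ + F1minus n ∘ₗ Hplus n i.succ +
        (-cartanB3_col1 i) • F1minus n =
      Hplus n i.succ ∘ₗ F1minus n + Hminus n i.succ ∘ₗ F1plus n +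
        F1plus n ∘ₗ Hplus n i.succ + F1minus n ∘ₗ Hminus n i.succ +
        (-cartanB3_col1 i) • F1plus n := by
  have main : ∀ a : Fin n → Fin 8,
      Hplus n i.succ (F1plus n (bclass a)) + Hminus n i.succ (F1minus n (bclass a)) +
        F1plus n (Hminus n i.succ (bclass a)) + F1minus n (Hplus n i.succ (bclass a)) +
        (-cartanB3_col1 i) • F1minus n (bclass a) =
      Hplus n i.succ (F1minus n (bclass a)) + Hminus n i.succ (F1plus n (bclass a)) +
        F1plus n (Hplus n i.succ (bclass a)) + F1minus n (Hminus n i.succ (bclass a)) +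
        (-cartanB3_col1 i) • F1plus n (bclass a) := by
    intro a
    have hk := key i a
    set t := -cartanB3_col1 i with ht
    set c := cseq i.succ a with hc
    simp only [map_add, map_smul, F1plus_apply, F1minus_apply, Hplus_apply, Hminus_apply]
    have hmax : max c 0 = c + max (-c) 0 := by
      have := max_sub_max c; omega
    rw [hmax]
    set S := Ssum a
    set D := Dsum a
    set HpS := Hplus n i.succ S with hHpS
    set HmS := Hminus n i.succ S with hHmS
    have hk' : HpS = HmS + (c + t) • S := by
      rw [← hk]; abel
    rw [hk']
    simp only [smul_add, add_smul]
    abel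
  apply Finsupp.lhom_ext
  intro a b
  have hb : (Finsupp.single a b : GrGroup n) = b • bclass a := by
    simp [bclass, Finsupp.smul_single]
  simp only [LinearMap.add_apply, LinearMap.comp_apply, LinearMap.smul_apply, hb,
    map_smul]
  rw [main a]
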